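/- Conservation of determinants along the degenerate Schlesinger flow: let A_1, …, A_{N+2} : U → M_2(ℂ) be holomorphic maps solving the degenerate Schlesinger system S(1,…,1,2;N) on the connected open set U. Then for each j = 2, …, N+1 the function t ↦ det A_j(t) is constant on U, and there exists a constant c ∈ ℂ such that det A_1(t) = c · t_1² for all t ∈ U. In particular, if det A_1 vanishes at one point of U then det A_1 ≡ 0 on U. -/

import Mathlib

open Finset

/-- Entrywise partial derivative of a matrix-valued map in the `k`-th coordinate
direction. -/
noncomputable def pder {N : ℕ} (k : Fin N)
    (f : (Fin N → ℂ) → Matrix (Fin 2) (Fin 2) ℂ) (t : Fin N → ℂ) :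
    Matrix (Fin 2) (Fin 2) ℂ :=
  Matrix.of fun a b => fderiv ℂ (fun s => f s a b) t (Pi.single k 1)

/-- Matrix commutator `[X, Y] = XY − YX`. -/
noncomputable def mComm (X Y : Matrix (Fin 2) (Fin 2) ℂ) : Matrix (Fin 2) (Fin 2) ℂ :=
  X * Y - Y * X

/-- The value `t_j` for the classical index `j ∈ {1, …, N+2}`: the coordinate
`t ⟨j−1⟩` for `1 ≤ j ≤ N`, and the frozen values `t_{N+1} = 1`, `t_{N+2} = 0`. -/
def tval {N : ℕ} (t : Fin N → ℂ) (j : ℕ) : ℂ :=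
  if h : 1 ≤ j ∧ j ≤ N then t ⟨j - 1, by omega⟩ else if j = N + 1 then 1 else 0

/-- The set of points `t ∈ ℂ^N` with `t_i ≠ 0`, `t_i ≠ 1` and `t_i ≠ t_j` for `i ≠ j`. -/
def goodDomain (N : ℕ) : Set (Fin N → ℂ) :=
  {t | (∀ i, t i ≠ 0 ∧ t i ≠ 1) ∧ ∀ i j, i ≠ j → t i ≠ t j}

/-- `A 1, …, A (N+2) : U → M₂(ℂ)` solve the degenerate Schlesinger system
`S(1,…,1,2;N)`: each entry is holomorphic on `U`, and the partial differential
equations obtained by equating coefficients of `dt_1, …, dt_N` in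
`dA_1 = Σ_{i=2}^{N+1} [A_i, A_1] d log t_i + (A_1 + [A_{N+2}, A_1]) d log t_1`,
`dA_j = Σ_{i=2,i≠j}^{N+2} [A_i, A_j] d log(t_j − t_i) + ([A_1,A_j]/t_j) d log(t_j/t_1)`
for `j = 2, …, N+1`, and
`dA_{N+2} = Σ_{i=2}^{N+1} (([A_i,A_1]/t_i) d log(t_i/t_1) + [A_i,A_{N+2}] d log t_i)`
hold on `U` (with `t_{N+1} = 1`, `t_{N+2} = 0` held constant).  The coordinate
`k : Fin N` represents the variable `t_{k+1}`. -/
def SolvesDegSch {N : ℕ} (U : Set (Fin N → ℂ))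
    (A : ℕ → (Fin N → ℂ) → Matrix (Fin 2) (Fin 2) ℂ) : Prop :=
  (∀ j ∈ Icc 1 (N + 2), ∀ a b : Fin 2, DifferentiableOn ℂ (fun t => A j t a b) U) ∧
  ∀ t ∈ U, ∀ k : Fin N,
    (pder k (A 1) t =
      if (k : ℕ) = 0 then (t k)⁻¹ • (A 1 t + mComm (A (N + 2) t) (A 1 t))
      else (t k)⁻¹ • mComm (A ((k : ℕ) + 1) t) (A 1 t)) ∧
    (∀ j ∈ Icc 2 (N + 1),
      pder k (A j) t =
        if (k : ℕ) + 1 = j then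
          (∑ i ∈ (Icc 2 (N + 2)).erase j,
            (tval t j - tval t i)⁻¹ • mComm (A i t) (A j t)) +
            ((tval t j) ^ 2)⁻¹ • mComm (A 1 t) (A j t)
        else if (k : ℕ) = 0 then
          (-(tval t j * t k)⁻¹) • mComm (A 1 t) (A j t)
        else (-(tval t j - t k)⁻¹) • mComm (A ((k : ℕ) + 1) t) (A j t)) ∧
    (pder k (A (N + 2)) t =
      if (k : ℕ) = 0 then
        ∑ i ∈ Icc 2 (N + 1), (-(tval t i * t k)⁻¹) • mComm (A i t) (A 1 t)
      else ((t k) ^ 2)⁻¹ • mComm (A ((k : ℕ) + 1) t) (A 1 t) +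
        (t k)⁻¹ • mComm (A ((k : ℕ) + 1) t) (A (N + 2) t))


namespace DegSchAux

/-- The "directional derivative of det" bilinear expression for 2×2 matrices. -/
def dDet (Y D : Matrix (Fin 2) (Fin 2) ℂ) : ℂ :=
  D 0 0 * Y 1 1 + Y 0 0 * D 1 1 - D 0 1 * Y 1 0 - Y 0 1 * D 1 0

lemma dDet_comm (X Y : Matrix (Fin 2) (Fin 2) ℂ) : dDet Y (mComm X Y) = 0 := by
  simp [dDet, mComm, Matrix.mul_apply, Fin.sum_univ_two]
  ring

lemma dDet_add (Y D E : Matrix (Fin 2) (Fin 2) ℂ) : dDet Y (D + E) = dDet Y D + dDet Y E := by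
  simp [dDet]; ring

lemma dDet_zero (Y : Matrix (Fin 2) (Fin 2) ℂ) : dDet Y 0 = 0 := by simp [dDet]

lemma dDet_smul (Y D : Matrix (Fin 2) (Fin 2) ℂ) (c : ℂ) : dDet Y (c • D) = c * dDet Y D := by
  simp [dDet, smul_eq_mul]; ring

lemma dDet_sum {ι : Type*} (Y : Matrix (Fin 2) (Fin 2) ℂ) (s : Finset ι)
    (g : ι → Matrix (Fin 2) (Fin 2) ℂ) :
    dDet Y (∑ i ∈ s, g i) = ∑ i ∈ s, dDet Y (g i) := by
  classical
  induction s using Finset.induction with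
  | empty => simp [dDet_zero]
  | insert _ _ h ih => simp [Finset.sum_insert h, dDet_add, ih]

lemma dDet_self (Y : Matrix (Fin 2) (Fin 2) ℂ) : dDet Y Y = 2 * Y.det := by
  simp [dDet, Matrix.det_fin_two]; ring

lemma hasFDerivAt_det {N : ℕ} (f : (Fin N → ℂ) → Matrix (Fin 2) (Fin 2) ℂ) (t : Fin N → ℂ)
    (h : ∀ a b, DifferentiableAt ℂ (fun s => f s a b) t) :
    HasFDerivAt (fun s => (f s).det)
      ((f t 0 0 • fderiv ℂ (fun s => f s 1 1) t + f t 1 1 • fderiv ℂ (fun s => f s 0 0) t)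
        - (f t 0 1 • fderiv ℂ (fun s => f s 1 0) t + f t 1 0 • fderiv ℂ (fun s => f s 0 1) t)) t := by
  have e : ∀ s : Fin N → ℂ, (f s).det = f s 0 0 * f s 1 1 - f s 0 1 * f s 1 0 :=
    fun s => Matrix.det_fin_two _
  simp only [e]
  exact ((h 0 0).hasFDerivAt.mul (h 1 1).hasFDerivAt).sub
    ((h 0 1).hasFDerivAt.mul (h 1 0).hasFDerivAt)

lemma detL_apply {N : ℕ} (f : (Fin N → ℂ) → Matrix (Fin 2) (Fin 2) ℂ) (t : Fin N → ℂ)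
    (k : Fin N) :
    ((f t 0 0 • fderiv ℂ (fun s => f s 1 1) t + f t 1 1 • fderiv ℂ (fun s => f s 0 0) t)
      - (f t 0 1 • fderiv ℂ (fun s => f s 1 0) t + f t 1 0 • fderiv ℂ (fun s => f s 0 1) t))
      (Pi.single k 1) = dDet (f t) (pder k f t) := by
  simp [dDet, pder, ContinuousLinearMap.sub_apply, ContinuousLinearMap.add_apply,
    ContinuousLinearMap.smul_apply, smul_eq_mul]
  ring

lemma fderiv_det_single {N : ℕ} (f : (Fin N → ℂ) → Matrix (Fin 2) (Fin 2) ℂ) (t : Fin N → ℂ)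
    (h : ∀ a b, DifferentiableAt ℂ (fun s => f s a b) t) (k : Fin N) :
    fderiv ℂ (fun s => (f s).det) t (Pi.single k 1) = dDet (f t) (pder k f t) := by
  rw [(hasFDerivAt_det f t h).fderiv]
  exact detL_apply f t k

lemma clm_ext_single {N : ℕ} (L : (Fin N → ℂ) →L[ℂ] ℂ)
    (h : ∀ k, L (Pi.single k 1) = 0) : L = 0 := by
  ext v
  have hv : v = ∑ k : Fin N, v k • (Pi.single k 1 : Fin N → ℂ) := by
    funext j
    simp [Finset.sum_apply, Pi.single_apply]
  rw [hv]
  simp [map_sum, map_smul, h]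

/-- A function on an open preconnected set with vanishing directional derivatives
is constant. -/
lemma const_on {N : ℕ} {U : Set (Fin N → ℂ)} (hUopen : IsOpen U) (hUconn : IsPreconnected U)
    {f : (Fin N → ℂ) → ℂ} (hdiff : ∀ t ∈ U, DifferentiableAt ℂ f t)
    (hz : ∀ t ∈ U, ∀ k : Fin N, fderiv ℂ f t (Pi.single k 1) = 0) :
    ∀ x ∈ U, ∀ y ∈ U, f x = f y := by
  have hfz : ∀ t ∈ U, fderiv ℂ f t = 0 := fun t ht => clm_ext_single (fderiv ℂ f t) (hz t ht)
  have hloc : ∀ x ∈ U, ∃ ε > 0, Metric.ball x ε ⊆ U ∧ ∀ y ∈ Metric.ball x ε, f y = f x := by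
    intro x hx
    obtain ⟨ε, hε, hball⟩ := Metric.isOpen_iff.mp hUopen x hx
    refine ⟨ε, hε, hball, fun y hy => ?_⟩
    refine (convex_ball x ε).is_const_of_fderivWithin_eq_zero
      (fun z hz' => ((hdiff z (hball hz')).differentiableWithinAt)) ?_ hy (Metric.mem_ball_self hε)
    intro z hz'
    rw [fderivWithin_of_isOpen Metric.isOpen_ball hz']
    exact hfz z (hball hz')
  intro x hx y hy
  set u : Set (Fin N → ℂ) :=
    {z | ∃ ε > 0, Metric.ball z ε ⊆ U ∧ ∀ w ∈ Metric.ball z ε, f w = f x} with hu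
  set v : Set (Fin N → ℂ) :=
    {z | ∃ ε > 0, Metric.ball z ε ⊆ U ∧ ∀ w ∈ Metric.ball z ε, f w ≠ f x} with hv
  have huopen : IsOpen u := by
    rw [Metric.isOpen_iff]
    rintro z ⟨ε, hε, hsub, hval⟩
    refine ⟨ε / 2, by linarith, fun z' hz' => ?_⟩
    have hsb : Metric.ball z' (ε / 2) ⊆ Metric.ball z ε := by
      apply Metric.ball_subset_ball'
      have := Metric.mem_ball.mp hz'
      linarith
    exact ⟨ε / 2, by linarith, hsb.trans hsub, fun w hw => hval w (hsb hw)⟩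
  have hvopen : IsOpen v := by
    rw [Metric.isOpen_iff]
    rintro z ⟨ε, hε, hsub, hval⟩
    refine ⟨ε / 2, by linarith, fun z' hz' => ?_⟩
    have hsb : Metric.ball z' (ε / 2) ⊆ Metric.ball z ε := by
      apply Metric.ball_subset_ball'
      have := Metric.mem_ball.mp hz'
      linarith
    exact ⟨ε / 2, by linarith, hsb.trans hsub, fun w hw => hval w (hsb hw)⟩
  have hcover : U ⊆ u ∪ v := by
    intro z hzU
    obtain ⟨ε, hε, hsub, hval⟩ := hloc z hzU
    by_cases hfzx : f z = f x
    · exact Or.inl ⟨ε, hε, hsub, fun w hw => (hval w hw).trans hfzx⟩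
    · exact Or.inr ⟨ε, hε, hsub, fun w hw => (hval w hw).symm ▸ hfzx⟩
  have hxu : x ∈ u := by
    obtain ⟨ε, hε, hsub, hval⟩ := hloc x hx
    exact ⟨ε, hε, hsub, hval⟩
  by_contra hne
  have hyv : y ∈ v := by
    rcases hcover hy with h1 | h1
    · obtain ⟨ε, hε, hsub, hval⟩ := h1
      exact absurd (hval y (Metric.mem_ball_self hε)) (fun hh => hne hh.symm)
    · exact h1
  obtain ⟨z, hzU, hzu, hzv⟩ := hUconn u v huopen hvopen hcover ⟨x, hx, hxu⟩ ⟨y, hy, hyv⟩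
  obtain ⟨ε1, hε1, _, hval1⟩ := hzu
  obtain ⟨ε2, hε2, _, hval2⟩ := hzv
  exact hval2 z (Metric.mem_ball_self hε2) (hval1 z (Metric.mem_ball_self hε1))

end DegSchAux

open DegSchAux in
/-- **Conservation of determinants along the degenerate Schlesinger flow**: if
`A_1, …, A_{N+2}` solve `S(1,…,1,2;N)` on a connected open `U` contained in the good
domain, then `det A_j` is constant on `U` for each `j = 2, …, N+1`, there is a constant
`c ∈ ℂ` with `det A_1(t) = c · t_1²` on `U`, and in particular if `det A_1` vanishes at
one point of `U` then `det A_1 ≡ 0` on `U`. -/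
theorem degSch_determinants_conserved (N : ℕ) (hN : 0 < N) (U : Set (Fin N → ℂ))
    (hUopen : IsOpen U) (hUconn : IsConnected U) (hUsub : U ⊆ goodDomain N)
    (A : ℕ → (Fin N → ℂ) → Matrix (Fin 2) (Fin 2) ℂ)
    (hsol : SolvesDegSch U A) :
    (∀ j ∈ Icc 2 (N + 1), ∃ c : ℂ, ∀ t ∈ U, (A j t).det = c) ∧
    (∃ c : ℂ, ∀ t ∈ U, (A 1 t).det = c * (t ⟨0, hN⟩) ^ 2) ∧
    ((∃ t₀ ∈ U, (A 1 t₀).det = 0) → ∀ t ∈ U, (A 1 t).det = 0) := by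
  obtain ⟨hdiffAll, hpde⟩ := hsol
  have hconn := hUconn.isPreconnected
  obtain ⟨t₀, ht₀⟩ := hUconn.nonempty
  have hdA : ∀ j ∈ Icc 1 (N + 2), ∀ t ∈ U, ∀ a b : Fin 2,
      DifferentiableAt ℂ (fun s => A j s a b) t := by
    intro j hj t ht a b
    exact (hdiffAll j hj a b).differentiableAt (hUopen.mem_nhds ht)
  -- Part 1
  have part1 : ∀ j ∈ Icc 2 (N + 1), ∃ c : ℂ, ∀ t ∈ U, (A j t).det = c := by
    intro j hj
    have hj' : j ∈ Icc 1 (N + 2) := by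
      simp only [Finset.mem_Icc] at hj ⊢; omega
    have hdet_diff : ∀ t ∈ U, DifferentiableAt ℂ (fun s => (A j s).det) t :=
      fun t ht => (hasFDerivAt_det (A j) t (fun a b => hdA j hj' t ht a b)).differentiableAt
    have hdz : ∀ t ∈ U, ∀ k : Fin N,
        fderiv ℂ (fun s => (A j s).det) t (Pi.single k 1) = 0 := by
      intro t ht k
      rw [fderiv_det_single (A j) t (fun a b => hdA j hj' t ht a b) k]
      rw [(hpde t ht k).2.1 j hj]
      by_cases h1 : (k : ℕ) + 1 = j
      · rw [if_pos h1, dDet_add, dDet_sum, dDet_smul, dDet_comm, mul_zero, add_zero]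
        simp [dDet_smul, dDet_comm]
      · rw [if_neg h1]
        by_cases h2 : (k : ℕ) = 0
        · rw [if_pos h2, dDet_smul, dDet_comm, mul_zero]
        · rw [if_neg h2, dDet_smul, dDet_comm, mul_zero]
    exact ⟨(A j t₀).det, fun t ht => const_on hUopen hconn hdet_diff hdz t ht t₀ ht₀⟩
  -- Part 2 setup
  have ht0ne : ∀ t ∈ U, t ⟨0, hN⟩ ≠ 0 := fun t ht => ((hUsub ht).1 ⟨0, hN⟩).1
  set k0 : Fin N := ⟨0, hN⟩ with hk0
  have h1' : (1 : ℕ) ∈ Icc 1 (N + 2) := by simp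
  have hp : ∀ t ∈ U, HasFDerivAt (fun s : Fin N → ℂ => ((s k0) ^ 2)⁻¹)
      ((-(2 * t k0 ^ 1) / ((t k0) ^ 2) ^ 2) •
        (ContinuousLinearMap.proj k0 : (Fin N → ℂ) →L[ℂ] ℂ)) t := by
    intro t ht
    have h0 : t k0 ≠ 0 := ht0ne t ht
    have hq : HasDerivAt (fun z : ℂ => (z ^ 2)⁻¹)
        (-(2 * t k0 ^ 1) / ((t k0) ^ 2) ^ 2) (t k0) := by
      have := (hasDerivAt_pow 2 (t k0)).inv (pow_ne_zero 2 h0)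
      exact this.congr_deriv (by norm_num)
    have hproj : HasFDerivAt (fun s : Fin N → ℂ => s k0)
        (ContinuousLinearMap.proj k0 : (Fin N → ℂ) →L[ℂ] ℂ) t :=
      (ContinuousLinearMap.proj k0 : (Fin N → ℂ) →L[ℂ] ℂ).hasFDerivAt
    exact hq.comp_hasFDerivAt (f := fun s : Fin N → ℂ => s k0) t hproj
  set g : (Fin N → ℂ) → ℂ := fun s => (A 1 s).det * ((s k0) ^ 2)⁻¹ with hgdef
  have hGat : ∀ t ∈ U, HasFDerivAt g
      ((A 1 t).det • ((-(2 * t k0 ^ 1) / ((t k0) ^ 2) ^ 2) •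
          (ContinuousLinearMap.proj k0 : (Fin N → ℂ) →L[ℂ] ℂ)) +
        ((t k0) ^ 2)⁻¹ •
          ((A 1 t 0 0 • fderiv ℂ (fun s => A 1 s 1 1) t +
            A 1 t 1 1 • fderiv ℂ (fun s => A 1 s 0 0) t) -
           (A 1 t 0 1 • fderiv ℂ (fun s => A 1 s 1 0) t +
            A 1 t 1 0 • fderiv ℂ (fun s => A 1 s 0 1) t))) t := by
    intro t ht
    exact (hasFDerivAt_det (A 1) t (fun a b => hdA 1 h1' t ht a b)).mul (hp t ht)
  have hGdiff : ∀ t ∈ U, DifferentiableAt ℂ g t := fun t ht => (hGat t ht).differentiableAt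
  have hGz : ∀ t ∈ U, ∀ k : Fin N, fderiv ℂ g t (Pi.single k 1) = 0 := by
    intro t ht k
    have h0 : t k0 ≠ 0 := ht0ne t ht
    rw [(hGat t ht).fderiv]
    rw [ContinuousLinearMap.add_apply, ContinuousLinearMap.smul_apply,
      ContinuousLinearMap.smul_apply, ContinuousLinearMap.smul_apply,
      ContinuousLinearMap.proj_apply, detL_apply]
    have hA1 := (hpde t ht k).1
    by_cases h2 : (k : ℕ) = 0
    · have hkk : k = k0 := Fin.ext (by simpa using h2)
      rw [if_pos h2] at hA1
      rw [hA1, dDet_smul, dDet_add, dDet_self, dDet_comm, add_zero, hkk, Pi.single_eq_same]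
      simp only [smul_eq_mul]
      field_simp
      ring
    · have hkk : k ≠ k0 := by
        intro hc
        exact h2 (by simp [hc, hk0])
      rw [if_neg h2] at hA1
      rw [hA1, dDet_smul, dDet_comm, Pi.single_eq_of_ne' hkk 1]
      simp
  have hgconst := const_on hUopen hconn hGdiff hGz
  have part2 : ∀ t ∈ U, (A 1 t).det = g t₀ * (t ⟨0, hN⟩) ^ 2 := by
    intro t ht
    have h0 : t k0 ≠ 0 := ht0ne t ht
    have hgt : g t = g t₀ := hgconst t ht t₀ ht₀
    have hh : (A 1 t).det = g t * (t k0) ^ 2 := by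
      rw [hgdef]
      field_simp
    rw [hh, hgt]
  refine ⟨part1, ⟨g t₀, part2⟩, ?_⟩
  rintro ⟨s₀, hs₀, hdet0⟩ t ht
  have h0 : s₀ ⟨0, hN⟩ ≠ 0 := ht0ne s₀ hs₀
  have hc0 : g t₀ = 0 := by
    have hth := part2 s₀ hs₀
    rw [hdet0] at hth
    rcases mul_eq_zero.mp hth.symm with h | h
    · exact h
    · exact absurd (pow_eq_zero_iff (by norm_num) |>.mp h) h0
  rw [part2 t ht, hc0, zero_mul]
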